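/- Let $s, t \in \mathbb{R}$ with $s + t > n/2$, and let $\varepsilon \in (0, s+t-n/2)$. Set $\sigma = \min\{s, t, s+t-n/2-\varepsilon\}$. Then there exists a constant $C = C(s,t,\varepsilon,n) > 0$ such that $(\langle\cdot\rangle^{-2s} * \langle\cdot\rangle^{-2t})(\xi) \leq C \langle\xi\rangle^{-2\sigma}$ for all $\xi \in \mathbb{R}^n$. -/
import Mathlib


open MeasureTheory Real

/-- Elementary quadratic inequality. -/
lemma one_add_sq_le_two_mul {x y z : ℝ} (hx : 0 ≤ x) (hy : 0 ≤ y) (hz : 0 ≤ z)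
    (h : x ≤ y + z) : 1 + x ^ 2 ≤ 2 * (1 + y ^ 2) * (1 + z ^ 2) := by
  have hx2 : x ^ 2 ≤ (y + z) ^ 2 := pow_le_pow_left₀ hx h 2
  nlinarith [sq_nonneg (y - z), sq_nonneg (y * z)]

/-- Elementary quadratic inequality. -/
lemma one_add_sq_le_sum {x y z : ℝ} (hx : 0 ≤ x) (hy : 0 ≤ y) (hz : 0 ≤ z)
    (h : x ≤ y + z) : 1 + x ^ 2 ≤ 2 * (1 + y ^ 2) + 2 * (1 + z ^ 2) := by
  have hx2 : x ^ 2 ≤ (y + z) ^ 2 := pow_le_pow_left₀ hx h 2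
  nlinarith [sq_nonneg (y - z)]

/-- Abstract elementary inequality behind the convolution estimate. -/
lemma abstract_bracket_bound {s t σ a U V W : ℝ}
    (hσs : σ ≤ s) (hσt : σ ≤ t) (hmin : σ ≤ 0 → s ≤ 0 ∨ t ≤ 0)
    (ha1 : a ≤ s + t) (ha2 : 0 < σ → a ≤ s + t - σ)
    (hU : 1 ≤ U) (hV : 1 ≤ V) (hW : 1 ≤ W)
    (hUb : U ≤ 2 * W * V) (hVb : V ≤ 2 * W * U) (hWb : W ≤ 2 * U + 2 * V) :
    U ^ (-s) * V ^ (-t) ≤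
      ((2:ℝ) ^ (-s) + (2:ℝ) ^ (-t) + (4:ℝ) ^ σ) * (W ^ (-σ) * (V ^ (-a) + U ^ (-a))) := by
  have hU0 : (0:ℝ) < U := lt_of_lt_of_le one_pos hU
  have hV0 : (0:ℝ) < V := lt_of_lt_of_le one_pos hV
  have hW0 : (0:ℝ) < W := lt_of_lt_of_le one_pos hW
  have hc1 : (0:ℝ) < (2:ℝ) ^ (-s) := rpow_pos_of_pos two_pos _
  have hc2 : (0:ℝ) < (2:ℝ) ^ (-t) := rpow_pos_of_pos two_pos _
  have hc3 : (0:ℝ) < (4:ℝ) ^ σ := rpow_pos_of_pos (by norm_num) _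
  have hWσ : (0:ℝ) < W ^ (-σ) := rpow_pos_of_pos hW0 _
  have hUa : (0:ℝ) < U ^ (-a) := rpow_pos_of_pos hU0 _
  have hVa : (0:ℝ) < V ^ (-a) := rpow_pos_of_pos hV0 _
  rcases le_or_gt σ 0 with hσ0 | hσ0
  · rcases hmin hσ0 with hs | ht
    · -- case s ≤ 0
      have key : U ^ (-s) * V ^ (-t) ≤ (2:ℝ) ^ (-s) * (W ^ (-σ) * V ^ (-a)) := by
        calc U ^ (-s) * V ^ (-t) ≤ (2 * W * V) ^ (-s) * V ^ (-t) := by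
              exact mul_le_mul_of_nonneg_right (rpow_le_rpow hU0.le hUb (by linarith))
                (rpow_pos_of_pos hV0 _).le
          _ = 2 ^ (-s) * W ^ (-s) * (V ^ (-s) * V ^ (-t)) := by
              rw [mul_rpow (by positivity) hV0.le, mul_rpow (by norm_num) hW0.le]; ring
          _ = 2 ^ (-s) * W ^ (-s) * V ^ (-(s + t)) := by
              rw [neg_add, rpow_add hV0]
          _ ≤ 2 ^ (-s) * W ^ (-σ) * V ^ (-a) := by
              have h1 : W ^ (-s) ≤ W ^ (-σ) :=
                rpow_le_rpow_of_exponent_le hW (by linarith)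
              have h2 : V ^ (-(s + t)) ≤ V ^ (-a) :=
                rpow_le_rpow_of_exponent_le hV (by linarith)
              have := mul_le_mul (mul_le_mul_of_nonneg_left h1 hc1.le) h2
                (rpow_pos_of_pos hV0 _).le (by positivity)
              linarith
          _ = 2 ^ (-s) * (W ^ (-σ) * V ^ (-a)) := by ring
      nlinarith [mul_pos hWσ hUa, mul_pos hWσ hVa, mul_pos hc2 (mul_pos hWσ hVa),
        mul_pos hc3 (mul_pos hWσ hVa), mul_pos hc1 (mul_pos hWσ hUa),
        mul_pos hc2 (mul_pos hWσ hUa), mul_pos hc3 (mul_pos hWσ hUa)]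
    · -- case t ≤ 0
      have key : U ^ (-s) * V ^ (-t) ≤ (2:ℝ) ^ (-t) * (W ^ (-σ) * U ^ (-a)) := by
        calc U ^ (-s) * V ^ (-t) ≤ U ^ (-s) * (2 * W * U) ^ (-t) := by
              exact mul_le_mul_of_nonneg_left (rpow_le_rpow hV0.le hVb (by linarith))
                (rpow_pos_of_pos hU0 _).le
          _ = 2 ^ (-t) * W ^ (-t) * (U ^ (-s) * U ^ (-t)) := by
              rw [mul_rpow (by positivity) hU0.le, mul_rpow (by norm_num) hW0.le]; ring
          _ = 2 ^ (-t) * W ^ (-t) * U ^ (-(s + t)) := by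
              rw [neg_add, rpow_add hU0]
          _ ≤ 2 ^ (-t) * W ^ (-σ) * U ^ (-a) := by
              have h1 : W ^ (-t) ≤ W ^ (-σ) :=
                rpow_le_rpow_of_exponent_le hW (by linarith)
              have h2 : U ^ (-(s + t)) ≤ U ^ (-a) :=
                rpow_le_rpow_of_exponent_le hU (by linarith)
              have := mul_le_mul (mul_le_mul_of_nonneg_left h1 hc2.le) h2
                (rpow_pos_of_pos hU0 _).le (by positivity)
              linarith
          _ = 2 ^ (-t) * (W ^ (-σ) * U ^ (-a)) := by ring
      nlinarith [mul_pos hWσ hUa, mul_pos hWσ hVa, mul_pos hc1 (mul_pos hWσ hVa),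
        mul_pos hc3 (mul_pos hWσ hVa), mul_pos hc1 (mul_pos hWσ hUa),
        mul_pos hc2 (mul_pos hWσ hVa), mul_pos hc3 (mul_pos hWσ hUa)]
  · -- case 0 < σ
    have haa : a ≤ s + t - σ := ha2 hσ0
    rcases le_total V U with hVU | hUV
    · -- V ≤ U, so W ≤ 4 U
      have hWU : W / 4 ≤ U := by linarith
      have key : U ^ (-s) * V ^ (-t) ≤ (4:ℝ) ^ σ * (W ^ (-σ) * V ^ (-a)) := by
        have e1 : U ^ (-s) = U ^ (-σ) * U ^ (-(s - σ)) := by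
          rw [← rpow_add hU0]; congr 1; ring
        have e2 : U ^ (-σ) ≤ (W / 4) ^ (-σ) :=
          rpow_le_rpow_of_nonpos (by linarith) hWU (by linarith)
        have e3 : (W / 4) ^ (-σ) = 4 ^ σ * W ^ (-σ) := by
          rw [div_rpow hW0.le (by norm_num), rpow_neg (by norm_num : (0:ℝ) ≤ 4),
            div_eq_mul_inv, inv_inv, mul_comm]
        have e4 : U ^ (-(s - σ)) ≤ V ^ (-(s - σ)) :=
          rpow_le_rpow_of_nonpos hV0 hVU (by linarith)
        have e5 : V ^ (-(s - σ)) * V ^ (-t) = V ^ (-(s + t - σ)) := by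
          rw [← rpow_add hV0]; congr 1; ring
        have e6 : V ^ (-(s + t - σ)) ≤ V ^ (-a) :=
          rpow_le_rpow_of_exponent_le hV (by linarith)
        have hUσ : (0:ℝ) < U ^ (-σ) := rpow_pos_of_pos hU0 _
        have hUsσ : (0:ℝ) < U ^ (-(s - σ)) := rpow_pos_of_pos hU0 _
        have hVsσ : (0:ℝ) < V ^ (-(s - σ)) := rpow_pos_of_pos hV0 _
        have hVt : (0:ℝ) < V ^ (-t) := rpow_pos_of_pos hV0 _
        calc U ^ (-s) * V ^ (-t) = U ^ (-σ) * (U ^ (-(s - σ)) * V ^ (-t)) := by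
              rw [e1]; ring
          _ ≤ (4 ^ σ * W ^ (-σ)) * (V ^ (-(s - σ)) * V ^ (-t)) := by
              apply mul_le_mul (e2.trans_eq e3)
                (mul_le_mul_of_nonneg_right e4 hVt.le) (by positivity) (by positivity)
          _ = (4 ^ σ * W ^ (-σ)) * V ^ (-(s + t - σ)) := by rw [e5]
          _ ≤ (4 ^ σ * W ^ (-σ)) * V ^ (-a) := by
              exact mul_le_mul_of_nonneg_left e6 (by positivity)
          _ = 4 ^ σ * (W ^ (-σ) * V ^ (-a)) := by ring
      nlinarith [mul_pos hWσ hUa, mul_pos hWσ hVa, mul_pos hc1 (mul_pos hWσ hVa),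
        mul_pos hc2 (mul_pos hWσ hVa), mul_pos hc1 (mul_pos hWσ hUa),
        mul_pos hc2 (mul_pos hWσ hUa), mul_pos hc3 (mul_pos hWσ hUa)]
    · -- U ≤ V, so W ≤ 4 V
      have hWV : W / 4 ≤ V := by linarith
      have key : U ^ (-s) * V ^ (-t) ≤ (4:ℝ) ^ σ * (W ^ (-σ) * U ^ (-a)) := by
        have e1 : V ^ (-t) = V ^ (-σ) * V ^ (-(t - σ)) := by
          rw [← rpow_add hV0]; congr 1; ring
        have e2 : V ^ (-σ) ≤ (W / 4) ^ (-σ) :=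
          rpow_le_rpow_of_nonpos (by linarith) hWV (by linarith)
        have e3 : (W / 4) ^ (-σ) = 4 ^ σ * W ^ (-σ) := by
          rw [div_rpow hW0.le (by norm_num), rpow_neg (by norm_num : (0:ℝ) ≤ 4),
            div_eq_mul_inv, inv_inv, mul_comm]
        have e4 : V ^ (-(t - σ)) ≤ U ^ (-(t - σ)) :=
          rpow_le_rpow_of_nonpos hU0 hUV (by linarith)
        have e5 : U ^ (-s) * U ^ (-(t - σ)) = U ^ (-(s + t - σ)) := by
          rw [← rpow_add hU0]; congr 1; ring
        have e6 : U ^ (-(s + t - σ)) ≤ U ^ (-a) :=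
          rpow_le_rpow_of_exponent_le hU (by linarith)
        have hUs : (0:ℝ) < U ^ (-s) := rpow_pos_of_pos hU0 _
        have hUtσ : (0:ℝ) < U ^ (-(t - σ)) := rpow_pos_of_pos hU0 _
        calc U ^ (-s) * V ^ (-t) = V ^ (-σ) * (U ^ (-s) * V ^ (-(t - σ))) := by
              rw [e1]; ring
          _ ≤ (4 ^ σ * W ^ (-σ)) * (U ^ (-s) * U ^ (-(t - σ))) := by
              apply mul_le_mul (e2.trans_eq e3)
                (mul_le_mul_of_nonneg_left e4 hUs.le) (by positivity) (by positivity)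
          _ = (4 ^ σ * W ^ (-σ)) * U ^ (-(s + t - σ)) := by rw [e5]
          _ ≤ (4 ^ σ * W ^ (-σ)) * U ^ (-a) := by
              exact mul_le_mul_of_nonneg_left e6 (by positivity)
          _ = 4 ^ σ * (W ^ (-σ) * U ^ (-a)) := by ring
      nlinarith [mul_pos hWσ hUa, mul_pos hWσ hVa, mul_pos hc1 (mul_pos hWσ hVa),
        mul_pos hc2 (mul_pos hWσ hVa), mul_pos hc1 (mul_pos hWσ hUa),
        mul_pos hc2 (mul_pos hWσ hUa), mul_pos hc3 (mul_pos hWσ hVa)]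

/-- If `s + t > n/2` and `0 < ε < s + t - n/2`, with `σ = min {s, t, s+t-n/2-ε}`, then there
is `C > 0` such that `(⟨·⟩^(-2s) * ⟨·⟩^(-2t))(ξ) ≤ C ⟨ξ⟩^(-2σ)` for all `ξ`. -/
theorem conv_japanese_bracket_decay (n : ℕ) (s t ε : ℝ) (hst : (n : ℝ) / 2 < s + t)
    (hε : 0 < ε) (hε' : ε < s + t - (n : ℝ) / 2)
    (σ : ℝ) (hσ : σ = min (min s t) (s + t - (n : ℝ) / 2 - ε)) :
    ∃ C : ℝ, 0 < C ∧ ∀ ξ : EuclideanSpace ℝ (Fin n),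
      (∫ η : EuclideanSpace ℝ (Fin n), (1 + ‖ξ - η‖ ^ 2) ^ (-s) * (1 + ‖η‖ ^ 2) ^ (-t)) ≤
        C * (1 + ‖ξ‖ ^ 2) ^ (-σ) := by
  have hX : 0 < s + t - (n:ℝ)/2 - ε := by linarith
  have hσs : σ ≤ s := by rw [hσ]; exact (min_le_left _ _).trans (min_le_left _ _)
  have hσt : σ ≤ t := by rw [hσ]; exact (min_le_left _ _).trans (min_le_right _ _)
  have hσ3 : σ ≤ s + t - (n:ℝ)/2 - ε := by rw [hσ]; exact min_le_right _ _
  have hmin : σ ≤ 0 → s ≤ 0 ∨ t ≤ 0 := by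
    intro h0
    by_contra hc
    push_neg at hc
    have : 0 < σ := by rw [hσ]; exact lt_min (lt_min hc.1 hc.2) hX
    linarith
  set a : ℝ := s + t - max σ 0 with ha
  have ha1 : a ≤ s + t := by
    have := le_max_right σ (0:ℝ); simp only [ha]; linarith
  have ha2 : 0 < σ → a ≤ s + t - σ := by
    intro h; simp only [ha, max_eq_left h.le]; linarith [le_refl σ]
  have hmax : max σ 0 ≤ s + t - (n:ℝ)/2 - ε := max_le hσ3 hX.le
  have hna : (Module.finrank ℝ (EuclideanSpace ℝ (Fin n)) : ℝ) < 2 * a := by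
    rw [finrank_euclideanSpace_fin]
    simp only [ha]; linarith
  -- integrability of the comparison weight
  have hInt : Integrable (fun x : EuclideanSpace ℝ (Fin n) => ((1:ℝ) + ‖x‖ ^ 2) ^ (-a)) := by
    have h := integrable_rpow_neg_one_add_norm_sq
      (E := EuclideanSpace ℝ (Fin n)) (μ := volume) (r := 2 * a) hna
    refine h.congr (Filter.Eventually.of_forall fun x => ?_)
    congr 1; ring
  set K : ℝ := ∫ x : EuclideanSpace ℝ (Fin n), ((1:ℝ) + ‖x‖ ^ 2) ^ (-a) with hK
  have hK0 : 0 ≤ K := integral_nonneg fun x => by positivity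
  set C₀ : ℝ := (2:ℝ) ^ (-s) + (2:ℝ) ^ (-t) + (4:ℝ) ^ σ with hC₀
  have hC₀pos : 0 < C₀ := by positivity
  refine ⟨C₀ * (2 * K) + 1, by positivity, fun ξ => ?_⟩
  have hWpos : (0:ℝ) < 1 + ‖ξ‖ ^ 2 := by positivity
  have hW1 : (1:ℝ) ≤ 1 + ‖ξ‖ ^ 2 := by nlinarith [sq_nonneg ‖ξ‖]
  -- pointwise bound
  have hpt : ∀ η : EuclideanSpace ℝ (Fin n),
      (1 + ‖ξ - η‖ ^ 2) ^ (-s) * (1 + ‖η‖ ^ 2) ^ (-t) ≤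
        (C₀ * (1 + ‖ξ‖ ^ 2) ^ (-σ)) *
          (((1:ℝ) + ‖η‖ ^ 2) ^ (-a) + ((1:ℝ) + ‖ξ - η‖ ^ 2) ^ (-a)) := by
    intro η
    have hU1 : (1:ℝ) ≤ 1 + ‖ξ - η‖ ^ 2 := by nlinarith [sq_nonneg ‖ξ - η‖]
    have hV1 : (1:ℝ) ≤ 1 + ‖η‖ ^ 2 := by nlinarith [sq_nonneg ‖η‖]
    have hn1 : ‖ξ - η‖ ≤ ‖ξ‖ + ‖η‖ := norm_sub_le ξ η
    have hn2 : ‖η‖ ≤ ‖ξ‖ + ‖ξ - η‖ := by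
      have := norm_sub_le ξ (ξ - η)
      simpa [sub_sub_cancel] using this
    have hn3 : ‖ξ‖ ≤ ‖ξ - η‖ + ‖η‖ := by
      calc ‖ξ‖ = ‖(ξ - η) + η‖ := by rw [sub_add_cancel]
        _ ≤ ‖ξ - η‖ + ‖η‖ := norm_add_le _ _
    have hUb : 1 + ‖ξ - η‖ ^ 2 ≤ 2 * (1 + ‖ξ‖ ^ 2) * (1 + ‖η‖ ^ 2) :=
      one_add_sq_le_two_mul (norm_nonneg _) (norm_nonneg _) (norm_nonneg _) hn1
    have hVb : 1 + ‖η‖ ^ 2 ≤ 2 * (1 + ‖ξ‖ ^ 2) * (1 + ‖ξ - η‖ ^ 2) :=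
      one_add_sq_le_two_mul (norm_nonneg _) (norm_nonneg _) (norm_nonneg _) hn2
    have hWb : 1 + ‖ξ‖ ^ 2 ≤ 2 * (1 + ‖ξ - η‖ ^ 2) + 2 * (1 + ‖η‖ ^ 2) :=
      one_add_sq_le_sum (norm_nonneg _) (norm_nonneg _) (norm_nonneg _) hn3
    have := abstract_bracket_bound hσs hσt hmin ha1 ha2 hU1 hV1 hW1 hUb hVb hWb
    calc (1 + ‖ξ - η‖ ^ 2) ^ (-s) * (1 + ‖η‖ ^ 2) ^ (-t)
        ≤ C₀ * ((1 + ‖ξ‖ ^ 2) ^ (-σ) *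
            (((1:ℝ) + ‖η‖ ^ 2) ^ (-a) + ((1:ℝ) + ‖ξ - η‖ ^ 2) ^ (-a))) := this
      _ = (C₀ * (1 + ‖ξ‖ ^ 2) ^ (-σ)) *
            (((1:ℝ) + ‖η‖ ^ 2) ^ (-a) + ((1:ℝ) + ‖ξ - η‖ ^ 2) ^ (-a)) := by ring
  -- integrability of shifted weight
  have hInt2 : Integrable (fun η : EuclideanSpace ℝ (Fin n) =>
      ((1:ℝ) + ‖ξ - η‖ ^ 2) ^ (-a)) := hInt.comp_sub_left ξ
  have hIntg : Integrable (fun η : EuclideanSpace ℝ (Fin n) =>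
      (C₀ * (1 + ‖ξ‖ ^ 2) ^ (-σ)) *
        (((1:ℝ) + ‖η‖ ^ 2) ^ (-a) + ((1:ℝ) + ‖ξ - η‖ ^ 2) ^ (-a))) :=
    (hInt.add hInt2).const_mul _
  -- measurability of the integrand
  have hcont : Continuous (fun η : EuclideanSpace ℝ (Fin n) =>
      (1 + ‖ξ - η‖ ^ 2) ^ (-s) * (1 + ‖η‖ ^ 2) ^ (-t)) := by
    apply Continuous.mul
    · apply Continuous.rpow_const
      · exact continuous_const.add (((continuous_const.sub continuous_id).norm).pow 2)
      · intro x; left; positivity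
    · apply Continuous.rpow_const
      · exact continuous_const.add (continuous_norm.pow 2)
      · intro x; left; positivity
  have hfInt : Integrable (fun η : EuclideanSpace ℝ (Fin n) =>
      (1 + ‖ξ - η‖ ^ 2) ^ (-s) * (1 + ‖η‖ ^ 2) ^ (-t)) := by
    refine hIntg.mono' hcont.aestronglyMeasurable ?_
    refine Filter.Eventually.of_forall fun η => ?_
    rw [Real.norm_of_nonneg (by positivity)]
    exact hpt η
  calc (∫ η : EuclideanSpace ℝ (Fin n), (1 + ‖ξ - η‖ ^ 2) ^ (-s) * (1 + ‖η‖ ^ 2) ^ (-t))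
      ≤ ∫ η : EuclideanSpace ℝ (Fin n),
          (C₀ * (1 + ‖ξ‖ ^ 2) ^ (-σ)) *
            (((1:ℝ) + ‖η‖ ^ 2) ^ (-a) + ((1:ℝ) + ‖ξ - η‖ ^ 2) ^ (-a)) :=
        integral_mono hfInt hIntg hpt
    _ = (C₀ * (1 + ‖ξ‖ ^ 2) ^ (-σ)) * (K + K) := by
        rw [integral_const_mul, integral_add hInt hInt2,
          integral_sub_left_eq_self (fun x : EuclideanSpace ℝ (Fin n) =>
            ((1:ℝ) + ‖x‖ ^ 2) ^ (-a)) volume ξ]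
    _ ≤ (C₀ * (2 * K) + 1) * (1 + ‖ξ‖ ^ 2) ^ (-σ) := by
        have hWσ : (0:ℝ) < (1 + ‖ξ‖ ^ 2) ^ (-σ) := rpow_pos_of_pos hWpos _
        nlinarith [hWσ]
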